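/- Let γ be a closed gauge on a finite-dimensional Hilbert space X, let ℓ : Y → ℝ be convex differentiable, A : X → Y linear, v ∈ X, and f(x) = ℓ(Ax) + ⟨v,x⟩ + γ(x). Suppose 0 ∈ ∂f(x̄) and γ(x̄) > 0. Then the polar gauge satisfies γ°(−A*∇ℓ(Ax̄) − v) = 1. -/

import Mathlib

open Filter Topology

/-- Convexity for an extended-real-valued function. -/
def ERealConvexOn {E : Type*} [AddCommGroup E] [Module ℝ E] (F : E → EReal) : Prop :=
  ∀ x y : E, ∀ a b : ℝ, 0 ≤ a → 0 ≤ b → a + b = 1 →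
    F (a • x + b • y) ≤ (a : EReal) * F x + (b : EReal) * F y

/-- for `f(x) = ℓ(Ax) + ⟨v,x⟩ + γ(x)` with `γ` a closed gauge, if
`0 ∈ ∂f(xb)` and `γ(xb) > 0`, then the polar gauge satisfies
`γ°(-A*∇ℓ(A xb) - v) = 1`. -/
theorem stmt11 {X Y : Type*}
    [NormedAddCommGroup X] [InnerProductSpace ℝ X] [FiniteDimensional ℝ X]
    [NormedAddCommGroup Y] [InnerProductSpace ℝ Y] [FiniteDimensional ℝ Y]
    (γ : X → EReal)
    (hγ0 : γ 0 = 0) (hγnonneg : ∀ x, 0 ≤ γ x)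
    (hγhom : ∀ (t : ℝ) (x : X), 0 < t → γ (t • x) = (t : EReal) * γ x)
    (hγconv : ERealConvexOn γ) (hγlsc : LowerSemicontinuous γ)
    (ℓ : Y → ℝ) (ℓ' : Y → Y)
    (hℓconv : ConvexOn ℝ Set.univ ℓ)
    (hℓdiff : ∀ y, HasGradientAt ℓ (ℓ' y) y)
    (A : X →L[ℝ] Y) (v : X) (xb : X)
    (hstat : (0 : X) ∈ {u : X |
      ∀ z : X, (((ℓ (A xb) + inner ℝ v xb : ℝ) : EReal) + γ xb) + ((inner ℝ u (z - xb) : ℝ) : EReal) ≤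
        ((ℓ (A z) + inner ℝ v z : ℝ) : EReal) + γ z})
    (hpos : (0 : EReal) < γ xb) :
    (⨆ z ∈ {z : X | γ z ≤ 1},
        ((inner ℝ (-(ContinuousLinearMap.adjoint A (ℓ' (A xb))) - v) z : ℝ) : EReal)) = 1 := by
  classical
  set w : X := -(ContinuousLinearMap.adjoint A (ℓ' (A xb))) - v with hw
  have hmin : ∀ z : X,
      (((ℓ (A xb) + inner ℝ v xb : ℝ) : EReal) + γ xb) ≤
        ((ℓ (A z) + inner ℝ v z : ℝ) : EReal) + γ z := by
    intro z
    have h := hstat z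
    simpa using h
  -- γ xb is finite
  have hne_bot : ∀ z : X, γ z ≠ ⊥ := fun z => ((hγnonneg z).trans_lt' (by simp)).ne'
  have hfin : γ xb ≠ ⊤ := by
    intro htop
    have h0 := hmin 0
    rw [htop, EReal.add_top_of_ne_bot (by exact EReal.coe_ne_bot _)] at h0
    simp [hγ0] at h0
  set s : ℝ := (γ xb).toReal with hs
  have hγxb : γ xb = (s : EReal) := (EReal.coe_toReal hfin (hne_bot xb)).symm
  have hspos : 0 < s := by
    have := hpos
    rw [hγxb] at this
    exact_mod_cast this
  -- key subgradient inequality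
  have key : ∀ (z : X) (rz : ℝ), γ z = (rz : EReal) →
      s + inner ℝ w z - inner ℝ w xb ≤ rz := by
    intro z rz hz
    set d : Y := A (z - xb) with hd
    have hg : HasDerivAt (fun t : ℝ => ℓ (A xb + t • d)) (inner ℝ (ℓ' (A xb)) d) 0 := by
      have hφ : HasDerivAt (fun t : ℝ => A xb + t • d) d 0 := by
        simpa using ((hasDerivAt_id (0:ℝ)).smul_const d).const_add (A xb)
      have hF : HasFDerivAt ℓ ((InnerProductSpace.toDual ℝ Y) (ℓ' (A xb)))
          (A xb + (0:ℝ) • d) := by simpa using (hℓdiff (A xb)).hasFDerivAt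
      have := hF.comp_hasDerivAt 0 hφ
      simpa [Function.comp_def] using this
    have hslope := hasDerivAt_iff_tendsto_slope.mp hg
    have hmono : 𝓝[>] (0:ℝ) ≤ 𝓝[≠] (0:ℝ) :=
      nhdsWithin_mono 0 (fun x hx => ne_of_gt hx)
    have hlim := hslope.mono_left hmono
    have hev : ∀ᶠ t in 𝓝[>] (0:ℝ),
        -(inner ℝ v (z - xb) + rz - s) ≤ slope (fun t : ℝ => ℓ (A xb + t • d)) 0 t := by
      filter_upwards [Ioc_mem_nhdsGT_of_mem (Set.left_mem_Ico.2 one_pos)] with t ht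
      obtain ⟨ht0, ht1⟩ := ht
      have hzt : (1 - t) • xb + t • z = xb + t • (z - xb) := by module
      have hconv := hγconv xb z (1 - t) t (by linarith) ht0.le (by ring)
      rw [hzt, hγxb, hz] at hconv
      have hconv' : γ (xb + t • (z - xb)) ≤ (((1 - t) * s + t * rz : ℝ) : EReal) := by
        rw [EReal.coe_add, EReal.coe_mul, EReal.coe_mul]
        exact hconv
      have h1 := (hmin (xb + t • (z - xb))).trans (add_le_add_right hconv' _)
      rw [hγxb] at h1
      have h2 : ℓ (A xb) + inner ℝ v xb + s ≤
          ℓ (A (xb + t • (z - xb))) + inner ℝ v (xb + t • (z - xb))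
            + ((1 - t) * s + t * rz) := by
        exact_mod_cast h1
      have hA : A (xb + t • (z - xb)) = A xb + t • d := by
        simp [hd, map_add, map_smul]
      have hv : (inner ℝ v (xb + t • (z - xb)) : ℝ)
          = inner ℝ v xb + t * inner ℝ v (z - xb) := by
        rw [inner_add_right, real_inner_smul_right]
      rw [hA, hv] at h2
      have hslope_eq : slope (fun t : ℝ => ℓ (A xb + t • d)) 0 t
          = (ℓ (A xb + t • d) - ℓ (A xb)) / t := by
        simp [slope_def_field]
      rw [hslope_eq, le_div_iff₀ ht0]
      nlinarith [h2]
    have hfinal := ge_of_tendsto hlim hev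
    have hadj : (inner ℝ (ℓ' (A xb)) d : ℝ)
        = inner ℝ (ContinuousLinearMap.adjoint A (ℓ' (A xb))) (z - xb) := by
      rw [hd, ContinuousLinearMap.adjoint_inner_left]
    have hwz : (inner ℝ w (z - xb) : ℝ)
        = -(inner ℝ (ContinuousLinearMap.adjoint A (ℓ' (A xb))) (z - xb)) - inner ℝ v (z - xb) := by
      rw [hw, inner_sub_left, inner_neg_left]
    have hsub : (inner ℝ w (z - xb) : ℝ) = inner ℝ w z - inner ℝ w xb := inner_sub_right _ _ _
    rw [hadj] at hfinal
    linarith [hfinal, hwz, hsub]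
  -- ⟨w, xb⟩ = s
  have hwxb : (inner ℝ w xb : ℝ) = s := by
    have h2top : γ ((2:ℝ) • xb) = ((2 * s : ℝ) : EReal) := by
      rw [hγhom 2 xb two_pos, hγxb]; exact (EReal.coe_mul 2 s).symm
    have hle : (inner ℝ w xb : ℝ) ≤ s := by
      have := key ((2:ℝ) • xb) (2 * s) h2top
      rw [real_inner_smul_right] at this
      linarith
    have hge : s ≤ inner ℝ w xb := by
      have := key 0 0 hγ0
      rw [inner_zero_right] at this
      linarith
    linarith
  -- ⟨w, z⟩ ≤ γ z for all z
  have hsub : ∀ z : X, ((inner ℝ w z : ℝ) : EReal) ≤ γ z := by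
    intro z
    rcases eq_or_ne (γ z) ⊤ with htop | htop
    · rw [htop]; exact le_top
    · have hz : γ z = ((γ z).toReal : EReal) := (EReal.coe_toReal htop (hne_bot z)).symm
      have := key z (γ z).toReal hz
      rw [hz, EReal.coe_le_coe_iff]
      linarith
  apply le_antisymm
  · exact iSup₂_le fun z hz => (hsub z).trans hz
  · have hmem : γ (s⁻¹ • xb) ≤ 1 := by
      rw [hγhom s⁻¹ xb (inv_pos.2 hspos), hγxb, ← EReal.coe_mul,
        inv_mul_cancel₀ hspos.ne']
      exact le_refl _
    have hval : ((inner ℝ w (s⁻¹ • xb) : ℝ) : EReal) = 1 := by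
      rw [real_inner_smul_right, hwxb, inv_mul_cancel₀ hspos.ne']
      exact EReal.coe_one
    calc (1 : EReal) = ((inner ℝ w (s⁻¹ • xb) : ℝ) : EReal) := hval.symm
      _ ≤ _ := le_iSup₂ (f := fun z _ => ((inner ℝ w z : ℝ) : EReal)) (s⁻¹ • xb) hmem
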